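/- Let (T_s)_{s∈S} be a bounded representation of a commutative monoid (S,+) on a Banach space E. Then the following are equivalent: (i) the net (T_s)_{s∈S} converges to the zero operator in the operator norm; (ii) there exists s₀ ∈ S such that ‖T_{s₀}‖ < 1; (iii) the zero operator is contained in the operator-norm closure of the set {T_s : s ∈ S}. -/

import Mathlib

open Filter Topology

/-- The pre-order on a commutative monoid `S`: `s ≤ t` iff `t = s + r` for some `r ∈ S`. -/
def sgLE {S : Type*} [AddCommMonoid S] (s t : S) : Prop := ∃ r : S, t = s + r

/-- The filter of "tails" of the directed set `(S, sgLE)`; convergence of the net `(T_s)_{s ∈ S}`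
is convergence along this filter. -/
def sgFilter (S : Type*) [AddCommMonoid S] : Filter S :=
  ⨅ s : S, Filter.principal {t | sgLE s t}

lemma sgFilter_mem {S : Type*} [AddCommMonoid S] {U : Set S} :
    U ∈ sgFilter S ↔ ∃ s : S, {t | sgLE s t} ⊆ U := by
  rw [sgFilter, Filter.mem_iInf_of_directed]
  · simp
  · intro a b
    refine ⟨a + b, Filter.principal_mono.mpr ?_, Filter.principal_mono.mpr ?_⟩ <;>
      rintro t ⟨r, rfl⟩
    · exact ⟨b + r, by abel⟩
    · exact ⟨a + r, by abel⟩

lemma sgLE_self {S : Type*} [AddCommMonoid S] (s : S) : sgLE s s := ⟨0, (add_zero s).symm⟩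

/-- For a bounded representation `(T_s)_{s∈S}` of a commutative monoid `(S,+)`
on a Banach space `E`, the following are equivalent: (i) the net `(T_s)` converges to `0` in the
operator norm; (ii) `‖T_{s₀}‖ < 1` for some `s₀`; (iii) `0` lies in the operator-norm closure of
`{T_s : s ∈ S}`. -/
theorem statement0 {E : Type*} [NormedAddCommGroup E] [NormedSpace ℝ E] [CompleteSpace E]
    {S : Type*} [AddCommMonoid S] (T : S → E →L[ℝ] E)
    (hT0 : T 0 = 1) (hTmul : ∀ s t : S, T (s + t) = T s * T t)
    (hbdd : ∃ M : ℝ, ∀ s : S, ‖T s‖ ≤ M) :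
    List.TFAE [
      Tendsto T (sgFilter S) (𝓝 0),
      ∃ s₀ : S, ‖T s₀‖ < 1,
      (0 : E →L[ℝ] E) ∈ closure (Set.range T)] := by
  have hpow : ∀ (n : ℕ) (s : S), T (n • s) = (T s) ^ n := by
    intro n s
    induction n with
    | zero => simpa using hT0
    | succ n ih => rw [succ_nsmul, hTmul, ih, pow_succ]
  tfae_have 1 → 3 := by
    intro h
    rw [Metric.mem_closure_iff]
    intro ε hε
    have hU : T ⁻¹' Metric.ball (0 : E →L[ℝ] E) ε ∈ sgFilter S :=
      h (Metric.ball_mem_nhds _ hε)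
    obtain ⟨s, hs⟩ := sgFilter_mem.mp hU
    exact ⟨T s, ⟨s, rfl⟩, by simpa [dist_comm] using hs (sgLE_self s)⟩
  tfae_have 3 → 2 := by
    intro h
    rw [Metric.mem_closure_iff] at h
    obtain ⟨x, ⟨s, rfl⟩, hx⟩ := h 1 one_pos
    exact ⟨s, by simpa [dist_eq_norm] using hx⟩
  tfae_have 2 → 1 := by
    rintro ⟨s₀, hs₀⟩
    obtain ⟨M, hM⟩ := hbdd
    have hM0 : 0 ≤ M := le_trans (norm_nonneg _) (hM 0)
    rw [Metric.tendsto_nhds]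
    intro ε hε
    have hq0 : 0 ≤ ‖T s₀‖ := norm_nonneg _
    obtain ⟨n, hn⟩ : ∃ n : ℕ, M * ‖T s₀‖ ^ n < ε := by
      have := tendsto_pow_atTop_nhds_zero_of_lt_one hq0 hs₀
      have := (this.const_mul M).eventually (gt_mem_nhds (by simpa using hε))
      exact this.exists
    rw [Filter.eventually_iff, sgFilter_mem]
    refine ⟨n • s₀, ?_⟩
    rintro t ⟨r, rfl⟩
    have : ‖T (n • s₀ + r)‖ ≤ ‖T s₀‖ ^ n * M := by
      rw [hTmul, hpow]
      calc ‖(T s₀) ^ n * T r‖ ≤ ‖(T s₀) ^ n‖ * ‖T r‖ := norm_mul_le _ _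
        _ ≤ ‖T s₀‖ ^ n * M := by
            have hpn : ‖(T s₀) ^ n‖ ≤ ‖T s₀‖ ^ n := by
              cases n with
              | zero => rw [pow_zero, pow_zero]; exact ContinuousLinearMap.norm_id_le
              | succ m => exact norm_pow_le' _ (Nat.succ_pos m)
            exact mul_le_mul hpn (hM r) (norm_nonneg _) (by positivity)
    simp only [Set.mem_setOf_eq, dist_zero_right]
    calc ‖T (n • s₀ + r)‖ ≤ ‖T s₀‖ ^ n * M := this
      _ = M * ‖T s₀‖ ^ n := mul_comm _ _
      _ < ε := hn
  tfae_finish
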